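/- Let κ, τ : ℝ → ℝ be functions with κ twice differentiable and τ differentiable, satisfying κ' = −2κτ, τ' = κ² − τ², and the biharmonic equation κ'' + 3τ·κ' = 4κ³. Then κ is identically zero. -/

import Mathlib

theorem stmt_7 (κ τ : ℝ → ℝ)
    (hκ : Differentiable ℝ κ) (hκ' : Differentiable ℝ (deriv κ))
    (hτ : Differentiable ℝ τ)
    (h1 : ∀ t, deriv κ t = -2 * κ t * τ t)
    (h2 : ∀ t, deriv τ t = (κ t) ^ 2 - (τ t) ^ 2)
    (hbih : ∀ t, deriv (deriv κ) t + 3 * τ t * deriv κ t = 4 * (κ t) ^ 3) :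
    ∀ t, κ t = 0 := by
  intro t
  have heq : deriv κ = fun s => -2 * (κ s * τ s) := funext fun s => by
    rw [h1 s]; ring
  have key : deriv (deriv κ) t = -2 * (deriv κ t * τ t + κ t * deriv τ t) := by
    rw [heq]
    rw [deriv_const_mul _ ((hκ t).fun_mul (hτ t))]
    rw [deriv_fun_mul (hκ t) (hτ t)]
    simp only [h1]; ring
  have hb := hbih t
  rw [key, h1 t, h2 t] at hb
  have : (κ t) ^ 3 = 0 := by nlinarith [hb]
  exact pow_eq_zero_iff (by norm_num) |>.mp this
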